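/- arXiv:2505.12171 — 6 statements merged into one kernel-verified Lean document; each statement's English description precedes it below -/
import Mathlib

section
/- (Proposition 2, magnitude bound.) Let A ≥ 0, G ≥ 0, Δt ∈ (0,1] be real numbers satisfying (G − Δt·A)² ≤ 4·A. Then the complex number λ(A,G,Δt) satisfies |λ(A,G,Δt)| = 1/√(1 + Δt·G), and in particular 0 < |λ(A,G,Δt)| ≤ 1. -/
/-- The eigenvalue of the D-LinOSS recurrent matrix `M(A,G,Δt)` with nonnegative
imaginary part (under the stability criterion). -/
noncomputable def lamEig (A G Δt : ℝ) : ℂ :=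
  ((1 + (Δt / 2) * G - (Δt ^ 2 / 2) * A) / (1 + Δt * G) : ℝ) +
    Complex.I * ((Δt / 2) * Real.sqrt (4 * A - (G - Δt * A) ^ 2) / (1 + Δt * G) : ℝ)

theorem magnitude_lamEig (A G Δt : ℝ) (hA : 0 ≤ A) (hG : 0 ≤ G)
    (hΔt : Δt ∈ Set.Ioc (0 : ℝ) 1) (hcrit : (G - Δt * A) ^ 2 ≤ 4 * A) :
    ‖lamEig A G Δt‖ = 1 / Real.sqrt (1 + Δt * G) ∧
    0 < ‖lamEig A G Δt‖ ∧ ‖lamEig A G Δt‖ ≤ 1 := by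
  obtain ⟨hΔ0, hΔ1⟩ := hΔt
  have hs : (0:ℝ) < 1 + Δt * G := by positivity
  have hr : Real.sqrt (4 * A - (G - Δt * A) ^ 2) ^ 2 = 4 * A - (G - Δt * A) ^ 2 :=
    Real.sq_sqrt (by linarith)
  set x : ℝ := (1 + (Δt / 2) * G - (Δt ^ 2 / 2) * A) / (1 + Δt * G) with hx
  set y : ℝ := (Δt / 2) * Real.sqrt (4 * A - (G - Δt * A) ^ 2) / (1 + Δt * G) with hy
  have habs : ‖lamEig A G Δt‖ = Real.sqrt (x ^ 2 + y ^ 2) := by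
    unfold lamEig
    rw [mul_comm Complex.I, Complex.norm_add_mul_I]
  have hxy : x ^ 2 + y ^ 2 = 1 / (1 + Δt * G) := by
    rw [hx, hy, div_pow, div_pow, ← add_div, mul_pow, hr]
    rw [div_eq_div_iff (by positivity) hs.ne']
    ring
  have hmain : ‖lamEig A G Δt‖ = 1 / Real.sqrt (1 + Δt * G) := by
    rw [habs, hxy, one_div, Real.sqrt_inv, one_div]
  refine ⟨hmain, ?_, ?_⟩
  · rw [hmain]; positivity
  · rw [hmain]
    rw [div_le_one (Real.sqrt_pos.mpr hs)]
    have : (1:ℝ) ≤ 1 + Δt * G := by nlinarith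
    calc (1:ℝ) = Real.sqrt 1 := Real.sqrt_one.symm
      _ ≤ Real.sqrt (1 + Δt * G) := Real.sqrt_le_sqrt this
end

section
/- (Proposition 3, injectivity.) Fix a real number Δt ∈ (0,1]. If (A₁,G₁) and (A₂,G₂) both lie in the stability set S(Δt) and λ(A₁,G₁,Δt) = λ(A₂,G₂,Δt), then A₁ = A₂ and G₁ = G₂. That is, the map Φ : S(Δt) → ℂ sending (A,G) to λ(A,G,Δt) is injective. -/
/-- The stability set `S(Δt)`. -/
def stabilitySet (Δt : ℝ) : Set (ℝ × ℝ) :=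
  {p | 0 ≤ p.1 ∧ 0 ≤ p.2 ∧ (p.2 - Δt * p.1) ^ 2 ≤ 4 * p.1}

lemma lamEig_norm_sq (A G Δt : ℝ) (hΔt : 0 < Δt) (hG : 0 ≤ G)
    (hs : (G - Δt * A) ^ 2 ≤ 4 * A) :
    ((1 + Δt / 2 * G - Δt ^ 2 / 2 * A) / (1 + Δt * G)) ^ 2 +
      (Δt / 2 * Real.sqrt (4 * A - (G - Δt * A) ^ 2) / (1 + Δt * G)) ^ 2
      = 1 / (1 + Δt * G) := by
  have hd : (0:ℝ) < 1 + Δt * G := by positivity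
  have hsq : Real.sqrt (4 * A - (G - Δt * A) ^ 2) ^ 2 = 4 * A - (G - Δt * A) ^ 2 :=
    Real.sq_sqrt (by linarith)
  field_simp
  rw [mul_comm A 4, hsq]
  ring

theorem lamEig_injective (Δt : ℝ) (hΔt : Δt ∈ Set.Ioc (0 : ℝ) 1)
    (A₁ G₁ A₂ G₂ : ℝ) (h₁ : (A₁, G₁) ∈ stabilitySet Δt)
    (h₂ : (A₂, G₂) ∈ stabilitySet Δt)
    (heq : lamEig A₁ G₁ Δt = lamEig A₂ G₂ Δt) :
    A₁ = A₂ ∧ G₁ = G₂ := by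
  obtain ⟨hA₁, hG₁, hs₁⟩ := h₁
  obtain ⟨hA₂, hG₂, hs₂⟩ := h₂
  obtain ⟨ht0, ht1⟩ := hΔt
  simp only [stabilitySet] at hA₁ hG₁ hs₁ hA₂ hG₂ hs₂
  have hre := congrArg Complex.re heq
  have him := congrArg Complex.im heq
  simp only [lamEig, Complex.add_re, Complex.add_im, Complex.mul_re, Complex.mul_im,
    Complex.I_re, Complex.I_im, Complex.ofReal_re, Complex.ofReal_im,
    zero_mul, one_mul, mul_zero, mul_one, zero_sub, zero_add, add_zero,
    neg_zero, sub_zero, neg_neg] at hre him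
  have k₁ := lamEig_norm_sq A₁ G₁ Δt ht0 hG₁ hs₁
  have k₂ := lamEig_norm_sq A₂ G₂ Δt ht0 hG₂ hs₂
  have hd₁ : (0:ℝ) < 1 + Δt * G₁ := by positivity
  have hd₂ : (0:ℝ) < 1 + Δt * G₂ := by positivity
  have hinv : 1 / (1 + Δt * G₁) = 1 / (1 + Δt * G₂) := by
    rw [← k₁, ← k₂, hre, him]
  have hG : G₁ = G₂ := by
    have h := (div_eq_div_iff hd₁.ne' hd₂.ne').mp hinv
    have h2 : Δt * G₁ = Δt * G₂ := by nlinarith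
    exact mul_left_cancel₀ ht0.ne' h2
  subst hG
  refine ⟨?_, rfl⟩
  have hn := (div_eq_div_iff hd₁.ne' hd₁.ne').mp hre
  have hn2 : Δt ^ 2 / 2 * A₁ = Δt ^ 2 / 2 * A₂ := by nlinarith
  exact mul_left_cancel₀ (by positivity) hn2
end

section
/- (Proposition 3, surjectivity via explicit inverse.) Fix a real number Δt ∈ (0,1]. Let λ ∈ ℂ satisfy 0 < |λ| ≤ 1 and Im(λ) ≥ 0, and define the real numbers A := (|λ|² − 2·Re(λ) + 1)/(Δt²·|λ|²) and G := (1 − |λ|²)/(Δt·|λ|²). Then A ≥ 0, G ≥ 0, (G − Δt·A)² ≤ 4·A (i.e., (A,G) ∈ S(Δt)), and λ is a root of the characteristic polynomial of M(A,G,Δt); in fact λ = λ(A,G,Δt). -/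
open Polynomial

/-- The D-LinOSS per-component recurrent matrix. -/
noncomputable def Mrec (A G Δt : ℝ) : Matrix (Fin 2) (Fin 2) ℝ :=
  !![1 / (1 + Δt * G), -(Δt * A) / (1 + Δt * G);
     Δt / (1 + Δt * G), 1 - (Δt ^ 2 * A) / (1 + Δt * G)]

private lemma charpoly_fin_two' (M : Matrix (Fin 2) (Fin 2) ℝ) :
    M.charpoly = X ^ 2 - C M.trace * X + C M.det := by
  rw [Matrix.charpoly, Matrix.det_fin_two, Matrix.charmatrix_apply_eq,
    Matrix.charmatrix_apply_eq, Matrix.charmatrix_apply_ne _ _ _ (by decide),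
    Matrix.charmatrix_apply_ne _ _ _ (by decide), Matrix.trace_fin_two, Matrix.det_fin_two]
  simp only [map_add, map_sub, map_mul]
  ring

theorem lamEig_surjective (Δt : ℝ) (hΔt : Δt ∈ Set.Ioc (0 : ℝ) 1)
    (lam : ℂ) (hpos : 0 < ‖lam‖) (hle : ‖lam‖ ≤ 1)
    (him : 0 ≤ lam.im) :
    let A : ℝ := (‖lam‖ ^ 2 - 2 * lam.re + 1) / (Δt ^ 2 * ‖lam‖ ^ 2)
    let G : ℝ := (1 - ‖lam‖ ^ 2) / (Δt * ‖lam‖ ^ 2)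
    0 ≤ A ∧ 0 ≤ G ∧ (G - Δt * A) ^ 2 ≤ 4 * A ∧
      Polynomial.aeval lam (Mrec A G Δt).charpoly = 0 ∧
      lam = lamEig A G Δt := by
  obtain ⟨hΔ0, hΔ1⟩ := hΔt
  set x := lam.re with hx
  set y := lam.im with hy
  have habs : ‖lam‖ ^ 2 = x ^ 2 + y ^ 2 := by
    rw [Complex.sq_norm, Complex.normSq_apply]; ring
  have hr2 : 0 < x ^ 2 + y ^ 2 := by
    rw [← habs]; exact pow_pos hpos 2
  have hr2le : x ^ 2 + y ^ 2 ≤ 1 := by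
    rw [← habs]; nlinarith [norm_nonneg lam]
  have hΔne : Δt ≠ 0 := ne_of_gt hΔ0
  have hr2ne : x ^ 2 + y ^ 2 ≠ 0 := ne_of_gt hr2
  have h1ne : Δt ^ 2 * (x ^ 2 + y ^ 2) ≠ 0 := by positivity
  have h2ne : Δt * (x ^ 2 + y ^ 2) ≠ 0 := by positivity
  intro A G
  have hA : A = ((x ^ 2 + y ^ 2) - 2 * x + 1) / (Δt ^ 2 * (x ^ 2 + y ^ 2)) := by
    simp only [A, habs]
  have hG : G = (1 - (x ^ 2 + y ^ 2)) / (Δt * (x ^ 2 + y ^ 2)) := by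
    simp only [G, habs]
  have hAnn : 0 ≤ A := by
    rw [hA]
    apply div_nonneg
    · nlinarith
    · positivity
  have hGnn : 0 ≤ G := by
    rw [hG]
    apply div_nonneg
    · linarith
    · positivity
  have hdiff : G - Δt * A = 2 * (x - (x ^ 2 + y ^ 2)) / (Δt * (x ^ 2 + y ^ 2)) := by
    rw [hA, hG]; field_simp; ring
  have hdisc : 4 * A - (G - Δt * A) ^ 2 = (2 * y / (Δt * (x ^ 2 + y ^ 2))) ^ 2 := by
    rw [hdiff, hA]; field_simp; ring
  have hstab : (G - Δt * A) ^ 2 ≤ 4 * A := by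
    nlinarith [hdisc, sq_nonneg (2 * y / (Δt * (x ^ 2 + y ^ 2)))]
  have hs : 1 + Δt * G = 1 / (x ^ 2 + y ^ 2) := by
    rw [hG]; field_simp
    ring
  have hsne : (1 + Δt * G) ≠ 0 := by
    rw [hs]; positivity
  refine ⟨hAnn, hGnn, hstab, ?_, ?_⟩
  · -- charpoly
    have htr : (Mrec A G Δt).trace = 2 * x := by
      rw [Mrec, Matrix.trace_fin_two_of, hs]
      simp only [div_div_eq_mul_div, div_one]
      rw [hA]
      field_simp
      ring
    have hdet : (Mrec A G Δt).det = x ^ 2 + y ^ 2 := by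
      rw [Mrec, Matrix.det_fin_two_of, hs]
      simp only [div_div_eq_mul_div, div_one]
      rw [hA]
      field_simp
      ring
    rw [charpoly_fin_two', htr, hdet]
    simp only [map_add, map_sub, map_mul, map_pow, aeval_X, aeval_C,
      Complex.coe_algebraMap]
    apply Complex.ext <;>
      simp only [Complex.add_re, Complex.add_im, Complex.sub_re, Complex.sub_im,
        Complex.mul_re, Complex.mul_im, Complex.ofReal_re, Complex.ofReal_im,
        Complex.zero_re, Complex.zero_im, pow_two, ← hx, ← hy] <;>
      ring
  · -- lam = lamEig
    have hsqrt : Real.sqrt (4 * A - (G - Δt * A) ^ 2) = 2 * y / (Δt * (x ^ 2 + y ^ 2)) := by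
      rw [hdisc]
      exact Real.sqrt_sq (by positivity)
    rw [lamEig, hsqrt]
    apply Complex.ext
    · simp only [Complex.add_re, Complex.ofReal_re, Complex.mul_re, Complex.I_re,
        Complex.I_im, Complex.ofReal_im, ← hx]
      rw [hs]
      simp only [div_div_eq_mul_div, div_one]
      rw [hA, hG]
      field_simp
      ring
    · simp only [Complex.add_im, Complex.ofReal_im, Complex.mul_im, Complex.I_re,
        Complex.I_im, Complex.ofReal_re, ← hy]
      rw [hs]
      simp only [div_div_eq_mul_div, div_one]
      field_simp
      ring
end

section
/- (Proposition 3, left-inverse identity.) Fix a real number Δt ∈ (0,1] and let (A,G) ∈ S(Δt). Writing λ := λ(A,G,Δt), one has A = (|λ|² − 2·Re(λ) + 1)/(Δt²·|λ|²) and G = (1 − |λ|²)/(Δt·|λ|²). -/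
theorem lamEig_left_inverse (Δt : ℝ) (hΔt : Δt ∈ Set.Ioc (0 : ℝ) 1)
    (A G : ℝ) (hA : 0 ≤ A) (hG : 0 ≤ G) (hcrit : (G - Δt * A) ^ 2 ≤ 4 * A) :
    A = (‖lamEig A G Δt‖ ^ 2 - 2 * (lamEig A G Δt).re + 1) /
        (Δt ^ 2 * ‖lamEig A G Δt‖ ^ 2) ∧
    G = (1 - ‖lamEig A G Δt‖ ^ 2) /
        (Δt * ‖lamEig A G Δt‖ ^ 2) := by
  obtain ⟨hΔt0, hΔt1⟩ := hΔt
  have hd : 0 < 1 + Δt * G := by positivity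
  have hs : Real.sqrt (4 * A - (G - Δt * A) ^ 2) ^ 2 = 4 * A - (G - Δt * A) ^ 2 :=
    Real.sq_sqrt (by linarith)
  have hre : (lamEig A G Δt).re = (1 + (Δt / 2) * G - (Δt ^ 2 / 2) * A) / (1 + Δt * G) := by
    simp only [lamEig, Complex.add_re, Complex.mul_re, Complex.I_re, Complex.I_im,
      Complex.ofReal_re, Complex.ofReal_im]
    ring
  have him : (lamEig A G Δt).im =
      (Δt / 2) * Real.sqrt (4 * A - (G - Δt * A) ^ 2) / (1 + Δt * G) := by
    simp only [lamEig, Complex.add_im, Complex.mul_im, Complex.I_re, Complex.I_im,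
      Complex.ofReal_re, Complex.ofReal_im]
    ring
  have habs : ‖lamEig A G Δt‖ ^ 2 = 1 / (1 + Δt * G) := by
    rw [Complex.sq_norm, Complex.normSq_apply, hre, him]
    have h2 : Real.sqrt (4 * A - (G - Δt * A) ^ 2) * Real.sqrt (4 * A - (G - Δt * A) ^ 2)
        = 4 * A - (G - Δt * A) ^ 2 := by nlinarith [hs]
    field_simp
    rw [show A * 4 = 4 * A by ring]
    linear_combination (Δt ^ 2) * hs
  constructor
  · rw [habs, hre]; field_simp; ring
  · rw [habs]; field_simp; ring
end

section
/- (Proposition 4, LinOSS-IM case.) The set of complex numbers {1/(1 + Δt²·A) + i·Δt·√A/(1 + Δt²·A) : A ∈ ℝ, A ≥ 0, Δt ∈ (0,1]} ∪ {1/(1 + Δt²·A) − i·Δt·√A/(1 + Δt²·A) : A ∈ ℝ, A ≥ 0, Δt ∈ (0,1]} has Lebesgue measure zero in ℂ (where √ is the real square root). -/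
open MeasureTheory

lemma aux_sphere (x y : ℝ) (h : (x - 1/2)^2 + y^2 = 1/4) :
    ((x:ℂ) + Complex.I * y) ∈ Metric.sphere (1/2 : ℂ) (1/2) := by
  simp only [Metric.mem_sphere, Complex.dist_eq]
  have hre : ((x:ℂ) + Complex.I * y - 1/2).re = x - 1/2 := by simp
  have him : ((x:ℂ) + Complex.I * y - 1/2).im = y := by simp
  rw [Complex.norm_def, Complex.normSq_apply, hre, him]
  rw [show (x-1/2)*(x-1/2) + y*y = (x-1/2)^2 + y^2 by ring, h]
  rw [show (1/4 : ℝ) = (1/2)^2 by norm_num, Real.sqrt_sq (by norm_num)]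

theorem linossIM_eigenvalues_measure_zero :
    volume
      ({z : ℂ | ∃ A Δt : ℝ, 0 ≤ A ∧ Δt ∈ Set.Ioc (0 : ℝ) 1 ∧
          z = ((1 / (1 + Δt ^ 2 * A) : ℝ) : ℂ) +
            Complex.I * ((Δt * Real.sqrt A / (1 + Δt ^ 2 * A) : ℝ) : ℂ)} ∪
        {z : ℂ | ∃ A Δt : ℝ, 0 ≤ A ∧ Δt ∈ Set.Ioc (0 : ℝ) 1 ∧
          z = ((1 / (1 + Δt ^ 2 * A) : ℝ) : ℂ) -
            Complex.I * ((Δt * Real.sqrt A / (1 + Δt ^ 2 * A) : ℝ) : ℂ)}) = 0 := by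
  refine measure_mono_null ?_ (Measure.addHaar_sphere (volume : Measure ℂ) (1/2) (1/2))
  have key : ∀ A Δt : ℝ, 0 ≤ A → 0 < 1 + Δt ^ 2 * A →
      (1 / (1 + Δt ^ 2 * A) - 1/2)^2 + (Δt * Real.sqrt A / (1 + Δt ^ 2 * A))^2 = 1/4 := by
    intro A Δt hA hpos
    rw [div_pow, mul_pow, Real.sq_sqrt hA]
    field_simp
    ring
  rintro z (⟨A, Δt, hA, hΔ, rfl⟩ | ⟨A, Δt, hA, hΔ, rfl⟩)
  · exact aux_sphere _ _ (key A Δt hA (by positivity))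
  · have h2 := aux_sphere (1 / (1 + Δt ^ 2 * A)) (-(Δt * Real.sqrt A / (1 + Δt ^ 2 * A)))
      (by rw [neg_sq]; exact key A Δt hA (by positivity))
    rw [show ((1 / (1 + Δt ^ 2 * A) : ℝ) : ℂ) -
        Complex.I * ((Δt * Real.sqrt A / (1 + Δt ^ 2 * A) : ℝ) : ℂ) =
        ((1 / (1 + Δt ^ 2 * A) : ℝ) : ℂ) +
        Complex.I * ((-(Δt * Real.sqrt A / (1 + Δt ^ 2 * A)) : ℝ) : ℂ) by push_cast; ring]
    exact h2
end

section
/- (Frequency–magnitude coupling of LinOSS-IM.) For all real A ≥ 0 and Δt > 0, the complex numbers λ^IM±(A,Δt) satisfy |λ^IM±(A,Δt)|² = 1/(1 + Δt²·A), and moreover Re(λ^IM±(A,Δt)) = |λ^IM±(A,Δt)|². -/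
/-- The LinOSS-IM per-component eigenvalues (`s = 1` for `+`, `s = -1` for `−`). -/
noncomputable def lamIM (A Δt : ℝ) (s : ℝ) : ℂ :=
  ((1 / (1 + Δt ^ 2 * A) : ℝ) : ℂ) +
    (s : ℂ) * Complex.I * ((Δt * Real.sqrt A / (1 + Δt ^ 2 * A) : ℝ) : ℂ)

theorem linossIM_frequency_magnitude_coupling (A Δt : ℝ) (hA : 0 ≤ A) (hΔt : 0 < Δt)
    (s : ℝ) (hs : s = 1 ∨ s = -1) :
    ‖lamIM A Δt s‖ ^ 2 = 1 / (1 + Δt ^ 2 * A) ∧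
    (lamIM A Δt s).re = ‖lamIM A Δt s‖ ^ 2 := by
  have hd : (0:ℝ) < 1 + Δt ^ 2 * A := by positivity
  have hs2 : s ^ 2 = 1 := by rcases hs with h | h <;> simp [h]
  have hsq : Real.sqrt A ^ 2 = A := Real.sq_sqrt hA
  have hre : (lamIM A Δt s).re = 1 / (1 + Δt ^ 2 * A) := by
    simp only [lamIM, Complex.add_re, Complex.ofReal_re, Complex.mul_re, Complex.mul_im,
      Complex.I_re, Complex.I_im, Complex.ofReal_im]
    ring
  have habs : ‖lamIM A Δt s‖ ^ 2 = 1 / (1 + Δt ^ 2 * A) := by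
    rw [Complex.sq_norm, Complex.normSq_apply, hre]
    have him : (lamIM A Δt s).im = s * (Δt * Real.sqrt A / (1 + Δt ^ 2 * A)) := by
      simp only [lamIM, Complex.add_im, Complex.ofReal_im, Complex.mul_re, Complex.mul_im,
        Complex.I_re, Complex.I_im, Complex.ofReal_re]
      ring
    rw [him]
    field_simp
    ring_nf
    rw [hs2, hsq]
    ring
  exact ⟨habs, by rw [habs, hre]⟩
end
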